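/- Let φ be a convex function on ℝ whose second distributional derivative ∂²φ is a probability measure absolutely continuous with respect to Lebesgue measure, with density ρ = φ''. Let u = φ* be its Legendre transform, with subgradient image contained in [0,1], and suppose ∫_ℝ ρ log ρ dx is finite. Then u''(y) > 0 for a.e. y ∈ (0,1) (Alexandrov second derivative) and ∫_ℝ φ''(x) log φ''(x) dx = -∫_0^1 log(u''(y)) dy. -/

import Mathlib

set_option maxHeartbeats 1000000

open MeasureTheory Filter Topology Set Asymptotics


lemma integral_linear_aux (a b k c : ℝ) :
    ∫ t in a..b, (k - c * (t - a)) = k * (b - a) - c * ((b - a) ^ 2 / 2) := by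
  rw [show (fun t => k - c * (t - a)) = fun t : ℝ => (k + c * a) - c * t by funext t; ring]
  rw [intervalIntegral.integral_sub (g := fun t : ℝ => c * t) (intervalIntegrable_const)
    ((continuous_const.mul continuous_id : Continuous fun t : ℝ => c * t).intervalIntegrable a b),
    intervalIntegral.integral_const_mul]
  simp only [intervalIntegral.integral_const, integral_id, smul_eq_mul]
  ring

lemma integral_linear_aux' (a b K c : ℝ) :
    ∫ t in a..b, (-K + c * (b - t)) = -K * (b - a) + c * ((b - a) ^ 2 / 2) := by
  rw [show (fun t => -K + c * (b - t)) = fun t : ℝ => (-K + c * b) - c * t by funext t; ring]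
  rw [intervalIntegral.integral_sub (g := fun t : ℝ => c * t) (intervalIntegrable_const)
    ((continuous_const.mul continuous_id : Continuous fun t : ℝ => c * t).intervalIntegrable a b),
    intervalIntegral.integral_const_mul]
  simp only [intervalIntegral.integral_const, integral_id, smul_eq_mul]
  ring


lemma alg_aux (ρ₀ ε K D E : ℝ) (hρ₀ : 0 < ρ₀) (hεpos : 0 < ε) (hε4 : ε ≤ ρ₀ / 4)
    (hKpos : 0 < K) (hDpos : 0 < D) (hKD1 : (ρ₀ - ε) * D ≤ K) (hKD2 : K ≤ (ρ₀ + ε) * D)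
    (hb1 : K * D - (ρ₀ + ε) * D ^ 2 / 2 ≤ E) (hb2 : E ≤ K * D - (ρ₀ - ε) * D ^ 2 / 2) :
    |E / K ^ 2 - 1 / (2 * ρ₀)| ≤ 2 * ε / ρ₀ ^ 2 := by
  have h4ε : 0 ≤ 3 * ε * ρ₀ - 4 * ε ^ 2 := by nlinarith
  have hup2 : 2 * ρ₀ ^ 2 * E ≤ K ^ 2 * (ρ₀ + 4 * ε) := by
    have t1 : 2 * ρ₀ ^ 2 * E ≤ 2 * ρ₀ ^ 2 * (K * D - (ρ₀ - ε) * D ^ 2 / 2) := by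
      nlinarith [pow_pos hρ₀ 2]
    nlinarith [t1, sq_nonneg ((ρ₀ + 4 * ε) * K - ρ₀ ^ 2 * D),
      mul_nonneg h4ε (sq_nonneg (ρ₀ * D)), (by linarith : (0:ℝ) < ρ₀ + 4 * ε)]
  have hq1 : 0 ≤ 3 * ρ₀ ^ 2 - 9 * ρ₀ * ε + 4 * ε ^ 2 := by nlinarith
  have hq2 : 0 ≤ 8 * ρ₀ * K - D * (5 * ρ₀ ^ 2 + ρ₀ * ε - 4 * ε ^ 2) := by
    nlinarith [mul_le_mul_of_nonneg_left hKD1 (by linarith : (0:ℝ) ≤ 8 * ρ₀),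
      mul_nonneg hDpos.le hq1]
  have hlo2 : K ^ 2 * (ρ₀ - 4 * ε) ≤ 2 * ρ₀ ^ 2 * E := by
    have t1 : 2 * ρ₀ ^ 2 * (K * D - (ρ₀ + ε) * D ^ 2 / 2) ≤ 2 * ρ₀ ^ 2 * E := by
      nlinarith [pow_pos hρ₀ 2]
    have hP : 0 ≤ (K - (ρ₀ - ε) * D) * ((ρ₀ + ε) * D - K) :=
      mul_nonneg (by linarith) (by linarith)
    nlinarith [t1, hP, mul_nonneg (mul_nonneg hεpos.le hDpos.le) hq2,
      (by linarith : (0:ℝ) ≤ ρ₀ - 4 * ε)]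
  have hK2pos : (0:ℝ) < K ^ 2 := by positivity
  have hupq : E / K ^ 2 ≤ (ρ₀ + 4 * ε) / (2 * ρ₀ ^ 2) := by
    rw [div_le_div_iff₀ hK2pos (by positivity)]
    nlinarith [hup2]
  have hloq : (ρ₀ - 4 * ε) / (2 * ρ₀ ^ 2) ≤ E / K ^ 2 := by
    rw [div_le_div_iff₀ (by positivity) hK2pos]
    nlinarith [hlo2]
  have hρ₀ne : ρ₀ ≠ 0 := ne_of_gt hρ₀
  have hid : (ρ₀ + 4 * ε) / (2 * ρ₀ ^ 2) - 1 / (2 * ρ₀) = 2 * ε / ρ₀ ^ 2 := by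
    field_simp; ring
  have hid2 : 1 / (2 * ρ₀) - (ρ₀ - 4 * ε) / (2 * ρ₀ ^ 2) = 2 * ε / ρ₀ ^ 2 := by
    field_simp; ring
  rw [abs_le]
  constructor <;> linarith

/-- Key analytic lemma: at a point where `F = φ'` has positive derivative `ρ₀`,
the Legendre transform `u` has Alexandrov second derivative `1/ρ₀` at `y₀ = F x₀`. -/
lemma legendre_alexandrov (φ u F : ℝ → ℝ) (ρ₀ x₀ : ℝ)
    (hF : ∀ x, HasDerivAt φ (F x) x)
    (hFcont : Continuous F) (hFmono : Monotone F)
    (hu : ∀ y, u y = ⨆ x : ℝ, (x * y - φ x))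
    (hsurj : ∀ y ∈ Set.Ioo (0:ℝ) 1, ∃ x, F x = y)
    (hx₀ : HasDerivAt F ρ₀ x₀) (hρ₀ : 0 < ρ₀)
    (hy₀ : F x₀ ∈ Set.Ioo (0:ℝ) 1) :
    Tendsto (fun h : ℝ => (u (F x₀ + h) + u (F x₀ - h) - 2 * u (F x₀)) / h ^ 2)
      (𝓝[≠] 0) (𝓝 (1 / ρ₀)) := by
  have hρ₀ne : ρ₀ ≠ 0 := ne_of_gt hρ₀
  have hFTC : ∀ a b : ℝ, φ b - φ a = ∫ t in a..b, F t := by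
    intro a b
    rw [intervalIntegral.integral_eq_sub_of_hasDerivAt (fun t _ => hF t)
      (hFcont.intervalIntegrable a b)]
  have hgrad : ∀ x z : ℝ, z * F x - φ z ≤ x * F x - φ x := by
    intro x z
    have h1 : F x * (z - x) ≤ φ z - φ x := by
      rcases le_total x z with h | h
      · have hm := intervalIntegral.integral_mono_on h (intervalIntegrable_const (c := F x) (μ := volume))
          (hFcont.intervalIntegrable x z) (fun t ht => hFmono ht.1)
        rw [intervalIntegral.integral_const, smul_eq_mul] at hm
        rw [hFTC x z]
        nlinarith [hm]
      · have hm := intervalIntegral.integral_mono_on h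
          (hFcont.intervalIntegrable z x) (intervalIntegrable_const (c := F x) (μ := volume))
          (fun t ht => hFmono ht.2)
        rw [intervalIntegral.integral_const, smul_eq_mul] at hm
        have h2 : φ x - φ z = ∫ t in z..x, F t := hFTC z x
        nlinarith [hm]
    nlinarith [h1]
  have hval : ∀ x : ℝ, u (F x) = x * F x - φ x := by
    intro x
    rw [hu]
    refine le_antisymm (ciSup_le (fun z => hgrad x z)) ?_
    exact le_ciSup ⟨x * F x - φ x, by rintro v ⟨z, rfl⟩; exact hgrad x z⟩ x
  rw [Metric.tendsto_nhdsWithin_nhds]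
  intro η ηpos
  set ε := min (ρ₀ / 4) (η * ρ₀ ^ 2 / 8) with hεdef
  have hεpos : 0 < ε := by
    have h1 : 0 < η * ρ₀ ^ 2 / 8 := by
      have := mul_pos ηpos (pow_pos hρ₀ 2); linarith
    exact lt_min (by linarith) h1
  have hε4 : ε ≤ ρ₀ / 4 := min_le_left _ _
  have hεη : ε ≤ η * ρ₀ ^ 2 / 8 := min_le_right _ _
  have hρε : 0 < ρ₀ - ε := by linarith
  clear_value ε
  have hev : ∀ᶠ t in 𝓝 x₀, |F t - F x₀ - (t - x₀) * ρ₀| ≤ ε * |t - x₀| := by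
    have := isLittleO_iff.mp (hasDerivAt_iff_isLittleO.mp hx₀) hεpos
    simpa [Real.norm_eq_abs, smul_eq_mul] using this
  obtain ⟨δ, δpos, hδ⟩ := Metric.eventually_nhds_iff.mp hev
  set k₀ := min ((ρ₀ - ε) * (δ / 2)) (min (F x₀) (1 - F x₀)) with hk₀def
  have hk₀pos : 0 < k₀ := by
    refine lt_min (by positivity) (lt_min hy₀.1 (by linarith [hy₀.2]))
  have hk₀le1 : k₀ ≤ (ρ₀ - ε) * (δ / 2) := min_le_left _ _
  have hk₀le2 : k₀ ≤ F x₀ := le_trans (min_le_right _ _) (min_le_left _ _)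
  have hk₀le3 : k₀ ≤ 1 - F x₀ := le_trans (min_le_right _ _) (min_le_right _ _)
  clear_value k₀
  refine ⟨k₀, hk₀pos, ?_⟩
  intro k hknemem hdist
  have hkne' : k ≠ 0 := hknemem
  have hkabs : |k| < k₀ := by simpa [Real.dist_eq] using hdist
  -- main per-side estimate
  have main : ∀ k : ℝ, k ≠ 0 → |k| < k₀ →
      |(u (F x₀ + k) - u (F x₀) - x₀ * k) / k ^ 2 - 1 / (2 * ρ₀)| ≤ 2 * ε / ρ₀ ^ 2 := by
    intro k hkne hkabs
    have hkk₀1 : |k| < (ρ₀ - ε) * (δ / 2) := lt_of_lt_of_le hkabs hk₀le1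
    have hkk₀2 : |k| < F x₀ := lt_of_lt_of_le hkabs hk₀le2
    have hkk₀3 : |k| < 1 - F x₀ := lt_of_lt_of_le hkabs hk₀le3
    have hy' : F x₀ + k ∈ Set.Ioo (0:ℝ) 1 := by
      constructor
      · nlinarith [neg_abs_le k]
      · nlinarith [le_abs_self k]
    obtain ⟨x', hx'⟩ := hsurj (F x₀ + k) hy'
    have hDδ : |x' - x₀| < δ / 2 := by
      by_contra hcon
      push_neg at hcon
      rcases le_total x₀ x' with hcase | hcase
      · have h1 : x₀ + δ / 2 ≤ x' := by
          rw [abs_of_nonneg (by linarith)] at hcon; linarith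
        have h2 := hδ (show dist (x₀ + δ / 2) x₀ < δ by
          rw [Real.dist_eq, abs_of_nonneg (by linarith : (0:ℝ) ≤ x₀ + δ / 2 - x₀)]; linarith)
        have h3 : F (x₀ + δ / 2) ≤ F x' := hFmono h1
        rw [abs_le, abs_of_nonneg (by linarith : (0:ℝ) ≤ x₀ + δ / 2 - x₀)] at h2
        have h4 : (ρ₀ - ε) * (δ / 2) ≤ k := by nlinarith [h2.1, h3, hx']
        linarith [le_abs_self k]
      · have h1 : x' ≤ x₀ - δ / 2 := by
          rw [abs_of_nonpos (by linarith)] at hcon; linarith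
        have h2 := hδ (show dist (x₀ - δ / 2) x₀ < δ by
          rw [Real.dist_eq, abs_of_nonpos (by linarith : x₀ - δ / 2 - x₀ ≤ 0)]; linarith)
        have h3 : F x' ≤ F (x₀ - δ / 2) := hFmono h1
        rw [abs_le, abs_of_nonpos (by linarith : x₀ - δ / 2 - x₀ ≤ 0)] at h2
        have h4 : k ≤ -((ρ₀ - ε) * (δ / 2)) := by nlinarith [h2.2, h3, hx']
        linarith [neg_abs_le k]
    have hx'b' : |k - (x' - x₀) * ρ₀| ≤ ε * |x' - x₀| := by
      have h := hδ (show dist x' x₀ < δ by rw [Real.dist_eq]; linarith)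
      rw [hx', show F x₀ + k - F x₀ - (x' - x₀) * ρ₀ = k - (x' - x₀) * ρ₀ by ring] at h
      exact h
    have hKpos : 0 < |k| := abs_pos.mpr hkne
    have hKD1 : (ρ₀ - ε) * |x' - x₀| ≤ |k| := by
      have h5 : |(x' - x₀) * ρ₀| - |k| ≤ ε * |x' - x₀| :=
        calc |(x' - x₀) * ρ₀| - |k| ≤ |(x' - x₀) * ρ₀ - k| := abs_sub_abs_le_abs_sub _ _
          _ = |k - (x' - x₀) * ρ₀| := abs_sub_comm _ _
          _ ≤ ε * |x' - x₀| := hx'b'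
      rw [abs_mul, abs_of_nonneg hρ₀.le] at h5
      nlinarith [h5]
    have hKD2 : |k| ≤ (ρ₀ + ε) * |x' - x₀| := by
      have h5 : |k| - |(x' - x₀) * ρ₀| ≤ ε * |x' - x₀| :=
        calc |k| - |(x' - x₀) * ρ₀| ≤ |k - (x' - x₀) * ρ₀| := abs_sub_abs_le_abs_sub _ _
          _ ≤ ε * |x' - x₀| := hx'b'
      rw [abs_mul, abs_of_nonneg hρ₀.le] at h5
      nlinarith [h5]
    have hDpos : 0 < |x' - x₀| := by nlinarith [abs_nonneg (x' - x₀)]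
    have hEint : u (F x₀ + k) - u (F x₀) - x₀ * k = ∫ t in x₀..x', (F x₀ + k - F t) := by
      have h1 := hval x'
      rw [hx'] at h1
      have h2 := hval x₀
      have h3 : φ x' - φ x₀ = ∫ t in x₀..x', F t := hFTC x₀ x'
      rw [intervalIntegral.integral_sub intervalIntegrable_const
        (hFcont.intervalIntegrable x₀ x'), intervalIntegral.integral_const, smul_eq_mul,
        ← h3, h1, h2]
      ring
    have hbounds : |k| * |x' - x₀| - (ρ₀ + ε) * |x' - x₀| ^ 2 / 2
          ≤ u (F x₀ + k) - u (F x₀) - x₀ * k ∧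
        u (F x₀ + k) - u (F x₀) - x₀ * k ≤ |k| * |x' - x₀| - (ρ₀ - ε) * |x' - x₀| ^ 2 / 2 := by
      rcases lt_or_gt_of_ne hkne with hkneg | hkpos
      · -- k < 0, x' ≤ x₀
        have hxle : x' ≤ x₀ := by
          by_contra hcon
          push_neg at hcon
          have := hFmono hcon.le
          rw [hx'] at this
          linarith
        have hK : |k| = -k := abs_of_neg hkneg
        have hD : |x' - x₀| = x₀ - x' := by rw [abs_of_nonpos (by linarith)]; ring
        have htd : ∀ t ∈ Set.Icc x' x₀, dist t x₀ < δ := by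
          intro t ht
          rw [Real.dist_eq, abs_of_nonpos (by linarith [ht.2])]
          have : x₀ - x' < δ / 2 := by rw [← hD]; exact hDδ
          linarith [ht.1]
        have hup : ∀ t ∈ Set.Icc x' x₀, F x₀ + k - F t ≤ -|k| + (ρ₀ + ε) * (x₀ - t) := by
          intro t ht
          have hb := hδ (htd t ht)
          rw [abs_le, abs_of_nonpos (by linarith [ht.2] : t - x₀ ≤ 0)] at hb
          rw [hK]
          nlinarith [hb.1]
        have hlo : ∀ t ∈ Set.Icc x' x₀, -|k| + (ρ₀ - ε) * (x₀ - t) ≤ F x₀ + k - F t := by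
          intro t ht
          have hb := hδ (htd t ht)
          rw [abs_le, abs_of_nonpos (by linarith [ht.2] : t - x₀ ≤ 0)] at hb
          rw [hK]
          nlinarith [hb.2]
        have hint1 := intervalIntegral.integral_mono_on (μ := volume) (g := fun t => F x₀ + k - F t) hxle
          ((by fun_prop : Continuous fun t : ℝ => -|k| + (ρ₀ - ε) * (x₀ - t)).intervalIntegrable
            x' x₀)
          ((continuous_const.sub hFcont).intervalIntegrable x' x₀) hlo
        have hint2 := intervalIntegral.integral_mono_on (μ := volume) (f := fun t => F x₀ + k - F t) hxle
          ((continuous_const.sub hFcont).intervalIntegrable x' x₀)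
          ((by fun_prop : Continuous fun t : ℝ => -|k| + (ρ₀ + ε) * (x₀ - t)).intervalIntegrable
            x' x₀) hup
        rw [integral_linear_aux' x' x₀ (|k|) (ρ₀ - ε)] at hint1
        rw [integral_linear_aux' x' x₀ (|k|) (ρ₀ + ε)] at hint2
        have hEswap : u (F x₀ + k) - u (F x₀) - x₀ * k
            = -∫ t in x'..x₀, (F x₀ + k - F t) :=
          hEint.trans (intervalIntegral.integral_symm x' x₀)
        constructor
        · rw [hEswap, hD]; nlinarith [hint2]
        · rw [hEswap, hD]; nlinarith [hint1]
      · -- k > 0, x₀ ≤ x'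
        have hxle : x₀ ≤ x' := by
          by_contra hcon
          push_neg at hcon
          have := hFmono hcon.le
          rw [hx'] at this
          linarith
        have hK : |k| = k := abs_of_pos hkpos
        have hD : |x' - x₀| = x' - x₀ := abs_of_nonneg (by linarith)
        have htd : ∀ t ∈ Set.Icc x₀ x', dist t x₀ < δ := by
          intro t ht
          rw [Real.dist_eq, abs_of_nonneg (by linarith [ht.1])]
          have : x' - x₀ < δ / 2 := by rw [← hD]; exact hDδ
          linarith [ht.2]
        have hup : ∀ t ∈ Set.Icc x₀ x', F x₀ + k - F t ≤ |k| - (ρ₀ - ε) * (t - x₀) := by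
          intro t ht
          have hb := hδ (htd t ht)
          rw [abs_le, abs_of_nonneg (by linarith [ht.1] : (0:ℝ) ≤ t - x₀)] at hb
          rw [hK]
          nlinarith [hb.1]
        have hlo : ∀ t ∈ Set.Icc x₀ x', |k| - (ρ₀ + ε) * (t - x₀) ≤ F x₀ + k - F t := by
          intro t ht
          have hb := hδ (htd t ht)
          rw [abs_le, abs_of_nonneg (by linarith [ht.1] : (0:ℝ) ≤ t - x₀)] at hb
          rw [hK]
          nlinarith [hb.2]
        have hint1 := intervalIntegral.integral_mono_on (μ := volume) (g := fun t => F x₀ + k - F t) hxle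
          ((by fun_prop : Continuous fun t : ℝ => |k| - (ρ₀ + ε) * (t - x₀)).intervalIntegrable
            x₀ x')
          ((continuous_const.sub hFcont).intervalIntegrable x₀ x') hlo
        have hint2 := intervalIntegral.integral_mono_on (μ := volume) (f := fun t => F x₀ + k - F t) hxle
          ((continuous_const.sub hFcont).intervalIntegrable x₀ x')
          ((by fun_prop : Continuous fun t : ℝ => |k| - (ρ₀ - ε) * (t - x₀)).intervalIntegrable
            x₀ x') hup
        rw [integral_linear_aux x₀ x' (|k|) (ρ₀ + ε)] at hint1
        rw [integral_linear_aux x₀ x' (|k|) (ρ₀ - ε)] at hint2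
        constructor
        · rw [hEint, hD]; nlinarith [hint1]
        · rw [hEint, hD]; nlinarith [hint2]
    have hfin := alg_aux ρ₀ ε (|k|) (|x' - x₀|) (u (F x₀ + k) - u (F x₀) - x₀ * k)
      hρ₀ hεpos hε4 hKpos hDpos hKD1 hKD2 hbounds.1 hbounds.2
    rw [show k ^ 2 = |k| ^ 2 from (sq_abs k).symm]
    exact hfin
  have h1 := main k hkne' hkabs
  have h2 := main (-k) (neg_ne_zero.mpr hkne') (by rwa [abs_neg])
  have hk2ne : k ^ 2 ≠ 0 := pow_ne_zero 2 hkne'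
  have hsplit : (u (F x₀ + k) + u (F x₀ - k) - 2 * u (F x₀)) / k ^ 2
      = (u (F x₀ + k) - u (F x₀) - x₀ * k) / k ^ 2
        + (u (F x₀ + -k) - u (F x₀) - x₀ * -k) / (-k) ^ 2 := by
    rw [show F x₀ - k = F x₀ + -k by ring, neg_pow]
    field_simp
    ring
  rw [Real.dist_eq, hsplit]
  have hεcmp : 4 * ε / ρ₀ ^ 2 ≤ η / 2 := by
    rw [div_le_div_iff₀ (by positivity) (by norm_num : (0:ℝ) < 2)]
    nlinarith [hεη, pow_pos hρ₀ 2]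
  calc |(u (F x₀ + k) - u (F x₀) - x₀ * k) / k ^ 2
        + (u (F x₀ + -k) - u (F x₀) - x₀ * -k) / (-k) ^ 2 - 1 / ρ₀|
      = |((u (F x₀ + k) - u (F x₀) - x₀ * k) / k ^ 2 - 1 / (2 * ρ₀))
        + ((u (F x₀ + -k) - u (F x₀) - x₀ * -k) / (-k) ^ 2 - 1 / (2 * ρ₀))| := by
        congr 1
        field_simp
        ring
    _ ≤ |(u (F x₀ + k) - u (F x₀) - x₀ * k) / k ^ 2 - 1 / (2 * ρ₀)|
        + |(u (F x₀ + -k) - u (F x₀) - x₀ * -k) / (-k) ^ 2 - 1 / (2 * ρ₀)| := abs_add_le _ _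
    _ ≤ 2 * ε / ρ₀ ^ 2 + 2 * ε / ρ₀ ^ 2 := by
        refine add_le_add h1 ?_
        rw [neg_pow]
        simpa using h2
    _ = 4 * ε / ρ₀ ^ 2 := by ring
    _ ≤ η / 2 := hεcmp
    _ < η := by linarith

/-- One-dimensional case of McCann's change-of-variables theorem: if `φ` is convex on `ℝ`,
with `∂²φ` a probability measure absolutely continuous wrt Lebesgue measure with density
`ρ = φ''`, the subgradient image is contained in `[0,1]`, and `∫ ρ log ρ` is finite, then the
Alexandrov second derivative `u''` of the Legendre transform `u = φ*` is positive a.e. on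
`(0,1)` and `∫_ℝ φ'' log φ'' dx = -∫_0^1 log(u''(y)) dy`. -/
theorem entropy_via_legendre (φ ρ w u : ℝ → ℝ)
    (hconv : ConvexOn ℝ Set.univ φ) (hdiff : Differentiable ℝ φ)
    (hρpos : ∀ x, 0 ≤ ρ x) (hρmeas : Measurable ρ)
    (hρint : Integrable ρ)
    -- `∂²φ` is absolutely continuous with density `ρ`:
    (hac : ∀ a b : ℝ, a ≤ b → deriv φ b - deriv φ a = ∫ x in Set.Ioc a b, ρ x)
    -- `∂²φ` is a probability measure:
    (hprob : ∫ x, ρ x = 1)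
    -- the subgradient image of `φ` is contained in `[0,1]`:
    (hrange : ∀ x, deriv φ x ∈ Set.Icc (0:ℝ) 1)
    -- `u = φ*` is the Legendre transform:
    (hu : ∀ y, u y = ⨆ x : ℝ, (x * y - φ x))
    -- finite entropy:
    (hent : Integrable (fun x => ρ x * Real.log (ρ x)))
    -- `w` is the Alexandrov second derivative of `u` a.e. on `(0,1)`:
    (hw : ∀ᵐ y ∂(volume.restrict (Set.Ioo (0:ℝ) 1)),
      Tendsto (fun h : ℝ => (u (y + h) + u (y - h) - 2 * u y) / h ^ 2)
        (𝓝[≠] 0) (𝓝 (w y))) :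
    (∀ᵐ y ∂(volume.restrict (Set.Ioo (0:ℝ) 1)), 0 < w y) ∧
    ∫ x, ρ x * Real.log (ρ x) = -∫ y in Set.Ioo (0:ℝ) 1, Real.log (w y) := by
  classical
  set F := deriv φ with hFdef
  have hFx : ∀ x, HasDerivAt φ (F x) x := fun x => (hdiff x).hasDerivAt
  have hFint2 : ∀ a b : ℝ, F b - F a = ∫ t in a..b, ρ t := by
    intro a b
    rcases le_total a b with h | h
    · rw [intervalIntegral.integral_of_le h]; exact hac a b h
    · have h2 := hac b a h
      rw [intervalIntegral.integral_symm, intervalIntegral.integral_of_le h]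
      linarith
  have hFcont : Continuous F := by
    have h : F = fun x => F 0 + ∫ t in (0:ℝ)..x, ρ t := by
      funext x; have := hFint2 0 x; linarith
    rw [h]
    exact continuous_const.add (intervalIntegral.continuous_primitive
      (fun a b => hρint.intervalIntegrable) 0)
  have hFmono : Monotone F := by
    intro a b hab
    have h := hFint2 a b
    have h2 : 0 ≤ ∫ t in a..b, ρ t := intervalIntegral.integral_nonneg hab (fun t _ => hρpos t)
    linarith
  -- surjectivity onto (0,1)
  have hbddA : BddAbove (range F) := ⟨1, by rintro v ⟨x, rfl⟩; exact (hrange x).2⟩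
  have hbddB : BddBelow (range F) := ⟨0, by rintro v ⟨x, rfl⟩; exact (hrange x).1⟩
  have htop : Tendsto F atTop (𝓝 (⨆ x, F x)) := tendsto_atTop_ciSup hFmono hbddA
  have hbot : Tendsto F atBot (𝓝 (⨅ x, F x)) := tendsto_atBot_ciInf hFmono hbddB
  have hseq1 : Tendsto (fun n : ℕ => F n - F (-n)) atTop (𝓝 ((⨆ x, F x) - ⨅ x, F x)) := by
    exact ((htop.comp tendsto_natCast_atTop_atTop).sub
      (hbot.comp (tendsto_neg_atTop_atBot.comp tendsto_natCast_atTop_atTop)))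
  have hseq2 : Tendsto (fun n : ℕ => F n - F (-n)) atTop (𝓝 1) := by
    have hm : Monotone (fun n : ℕ => Set.Ioc (-(n:ℝ)) n) := by
      intro m n hmn
      have h : (m:ℝ) ≤ n := Nat.cast_le.mpr hmn
      exact Set.Ioc_subset_Ioc (by linarith) h
    have hu2 : ⋃ n : ℕ, Set.Ioc (-(n:ℝ)) n = Set.univ := by
      apply Set.eq_univ_of_forall
      intro x
      obtain ⟨n, hn⟩ := exists_nat_gt |x|
      refine Set.mem_iUnion.mpr ⟨n, ?_, ?_⟩
      · have := neg_abs_le x; linarith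
      · have := le_abs_self x; linarith
    have h3 := tendsto_setIntegral_of_monotone (fun n => measurableSet_Ioc) hm
      (by rw [hu2]; exact hρint.integrableOn)
    rw [hu2, setIntegral_univ, hprob] at h3
    apply h3.congr
    intro n
    exact (hac (-(n:ℝ)) n (neg_le_self (Nat.cast_nonneg n))).symm
  have hsupinf : (⨆ x, F x) - (⨅ x, F x) = 1 := tendsto_nhds_unique hseq1 hseq2
  have hsup1 : (⨆ x, F x) ≤ 1 := ciSup_le (fun x => (hrange x).2)
  have hinf0 : 0 ≤ ⨅ x, F x := le_ciInf (fun x => (hrange x).1)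
  have hsurj : ∀ y ∈ Set.Ioo (0:ℝ) 1, ∃ x, F x = y := by
    intro y hy
    obtain ⟨b, hb⟩ : ∃ b, y < F b := by
      apply exists_lt_of_lt_ciSup
      have : (⨆ x, F x) = 1 := by linarith
      rw [this]; exact hy.2
    obtain ⟨a, ha⟩ : ∃ a, F a < y := by
      apply exists_lt_of_ciInf_lt
      have : (⨅ x, F x) = 0 := by linarith
      rw [this]; exact hy.1
    have hab : a ≤ b := by
      by_contra hcon
      push_neg at hcon
      have := hFmono hcon.le
      linarith
    obtain ⟨x, _, hx⟩ := intermediate_value_Icc hab hFcont.continuousOn ⟨ha.le, hb.le⟩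
    exact ⟨x, hx⟩
  -- a.e. derivative of F is ρ
  have haed : ∀ᵐ x, HasDerivAt F (ρ x) x := by
    let G : StieltjesFunction ℝ := ⟨F, hFmono, fun x => hFcont.continuousAt.continuousWithinAt⟩
    have hGm : G.measure = volume.withDensity (fun x => ENNReal.ofReal (ρ x)) := by
      refine Measure.ext_of_Ioc _ _ (fun a b hab => ?_)
      rw [StieltjesFunction.measure_Ioc, withDensity_apply _ measurableSet_Ioc]
      have h1 : G b - G a = ∫ x in Set.Ioc a b, ρ x := hac a b hab.le
      rw [h1, ofReal_integral_eq_lintegral_ofReal hρint.integrableOn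
        (Filter.Eventually.of_forall fun x => hρpos x)]
    have hrn := Measure.rnDeriv_withDensity volume (hρmeas.ennreal_ofReal)
    filter_upwards [G.ae_hasDerivAt, hrn] with x hx hx2
    rw [hGm, hx2] at hx
    simpa [ENNReal.toReal_ofReal (hρpos x)] using hx
  -- points of S0 map into (0,1)
  have hIoo : ∀ x, HasDerivAt F (ρ x) x → 0 < ρ x → F x ∈ Set.Ioo (0:ℝ) 1 := by
    intro x hx hρx
    rcases ((hrange x).1).lt_or_eq with h0 | h0
    · rcases ((hrange x).2).lt_or_eq with h1 | h1
      · exact ⟨h0, h1⟩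
      · exfalso
        have hconst : ∀ t ∈ Set.Ici x, F t = F x := fun t ht =>
          le_antisymm (h1 ▸ (hrange t).2) (hFmono ht)
        have h2 : HasDerivWithinAt F 0 (Set.Ici x) x :=
          (hasDerivWithinAt_const x _ (F x)).congr hconst (hconst x Set.self_mem_Ici)
        have h3 : HasDerivWithinAt F (ρ x) (Set.Ici x) x := hx.hasDerivWithinAt
        have hud : UniqueDiffWithinAt ℝ (Set.Ici x) x :=
          uniqueDiffOn_Ici x x Set.self_mem_Ici
        have h4 := h2.derivWithin hud
        have h5 := h3.derivWithin hud
        rw [h4] at h5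
        linarith
    · exfalso
      have hconst : ∀ t ∈ Set.Iic x, F t = F x := fun t ht =>
        le_antisymm (hFmono ht) (by rw [← h0]; exact (hrange t).1)
      have h2 : HasDerivWithinAt F 0 (Set.Iic x) x :=
        (hasDerivWithinAt_const x _ (F x)).congr hconst (hconst x Set.self_mem_Iic)
      have h3 : HasDerivWithinAt F (ρ x) (Set.Iic x) x := hx.hasDerivWithinAt
      have hud : UniqueDiffWithinAt ℝ (Set.Iic x) x :=
        uniqueDiffOn_Iic x x Set.self_mem_Iic
      have h4 := h2.derivWithin hud
      have h5 := h3.derivWithin hud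
      rw [h4] at h5
      linarith
  -- extract measurable null set for hw
  obtain ⟨N, hNmeas, hNnull, hNprop⟩ :
      ∃ N : Set ℝ, MeasurableSet N ∧ volume (N ∩ Set.Ioo (0:ℝ) 1) = 0 ∧
        ∀ y ∈ Set.Ioo (0:ℝ) 1 \ N,
          Tendsto (fun h : ℝ => (u (y + h) + u (y - h) - 2 * u y) / h ^ 2)
            (𝓝[≠] 0) (𝓝 (w y)) := by
    rw [ae_iff, Measure.restrict_apply' measurableSet_Ioo] at hw
    obtain ⟨N, hsub, hNmeas, hNnull⟩ := exists_measurable_superset_of_null hw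
    refine ⟨N, hNmeas, measure_mono_null Set.inter_subset_left hNnull, ?_⟩
    intro y hy
    by_contra hcon
    exact hy.2 (hsub ⟨hcon, hy.1⟩)
  -- the good sets
  set S0 := {x | HasDerivAt F (ρ x) x ∧ 0 < ρ x} with hS0def
  have hS0meas : MeasurableSet S0 := by
    have h1 : S0 = ({x | DifferentiableAt ℝ F x} ∩ {x | deriv F x = ρ x}) ∩ {x | 0 < ρ x} := by
      ext x
      simp only [hS0def, Set.mem_inter_iff, Set.mem_setOf_eq]
      constructor
      · rintro ⟨h, hρ⟩; exact ⟨⟨h.differentiableAt, h.deriv⟩, hρ⟩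
      · rintro ⟨⟨hd, he⟩, hρ⟩; exact ⟨he ▸ hd.hasDerivAt, hρ⟩
    rw [h1]
    exact ((measurableSet_of_differentiableAt ℝ F).inter
      (measurableSet_eq_fun (measurable_deriv F) hρmeas)).inter
      (measurableSet_lt measurable_const hρmeas)
  have hS0inj : Set.InjOn F S0 := by
    have key : ∀ a b : ℝ, a < b → F a = F b → b ∈ S0 → False := by
      intro a b h hab hb
      have hconst : ∀ t ∈ Set.Icc a b, F t = F b := fun t ht =>
        le_antisymm (hFmono ht.2) (hab ▸ hFmono ht.1)
      have h2 : HasDerivWithinAt F 0 (Set.Icc a b) b :=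
        (hasDerivWithinAt_const b _ (F b)).congr hconst (hconst b (Set.right_mem_Icc.2 h.le))
      have h3 : HasDerivWithinAt F (ρ b) (Set.Icc a b) b := hb.1.hasDerivWithinAt
      have hud : UniqueDiffWithinAt ℝ (Set.Icc a b) b :=
        uniqueDiffOn_Icc h b (Set.right_mem_Icc.2 h.le)
      have h4 := h2.derivWithin hud
      have h5 := h3.derivWithin hud
      rw [h4] at h5
      exact absurd hb.2 (by rw [← h5]; exact lt_irrefl 0)
    intro a ha b hb hab
    by_contra hne
    rcases lt_or_gt_of_ne hne with h | h
    · exact key a b h hab hb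
    · exact key b a h hab.symm ha
  set S : Set ℝ := S0 \ F ⁻¹' N with hSdef
  have hSmeas : MeasurableSet S := hS0meas.diff (hFcont.measurable hNmeas)
  have hSsubS0 : S ⊆ S0 := Set.diff_subset
  have hSinj : Set.InjOn F S := hS0inj.mono hSsubS0
  -- change of variables, lintegral version
  have himg : ∀ T : Set ℝ, MeasurableSet T → T ⊆ S0 →
      volume (F '' T) = ∫⁻ x in T, ENNReal.ofReal (ρ x) := by
    intro T hT hTsub
    have h := lintegral_image_eq_lintegral_abs_det_fderiv_mul volume hT
      (fun x hx => ((hTsub hx).1.hasDerivWithinAt).hasFDerivWithinAt)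
      (hS0inj.mono hTsub) (fun _ => (1 : ENNReal))
    simp only [ContinuousLinearMap.det_toSpanSingleton, Pi.one_apply, mul_one, setLIntegral_one] at h
    rw [h]
    apply lintegral_congr_ae
    apply ae_restrict_of_ae
    apply Filter.Eventually.of_forall
    intro x
    simp only [abs_of_nonneg (hρpos x)]
  -- T := F⁻¹N ∩ S0 is Lebesgue-null
  have hTmeas : MeasurableSet (F ⁻¹' N ∩ S0) := (hFcont.measurable hNmeas).inter hS0meas
  have hTint : ∫⁻ x in F ⁻¹' N ∩ S0, ENNReal.ofReal (ρ x) = 0 := by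
    rw [← himg _ hTmeas Set.inter_subset_right]
    refine measure_mono_null ?_ hNnull
    rintro _ ⟨x, hx, rfl⟩
    exact ⟨hx.1, hIoo x hx.2.1 hx.2.2⟩
  have hTnull : volume (F ⁻¹' N ∩ S0) = 0 := by
    have h1 := (lintegral_eq_zero_iff hρmeas.ennreal_ofReal).mp hTint
    rw [Filter.EventuallyEq, ae_restrict_iff' hTmeas] at h1
    rw [measure_eq_zero_iff_ae_notMem]
    filter_upwards [h1] with x hx
    intro hxT
    have h2 := hx hxT
    simp only [Pi.zero_apply, ENNReal.ofReal_eq_zero] at h2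
    exact absurd h2 (not_le.mpr hxT.2.2)
  have hScomp : ∫⁻ x in Sᶜ, ENNReal.ofReal (ρ x) = 0 := by
    have hsub : Sᶜ ⊆ ({x | ¬ HasDerivAt F (ρ x) x} ∪ {x | ρ x ≤ 0}) ∪ (F ⁻¹' N ∩ S0) := by
      intro x hx
      rw [hSdef] at hx
      by_cases h1 : x ∈ S0
      · right
        rw [Set.mem_compl_iff, Set.mem_diff, not_and_or, not_not] at hx
        rcases hx with h | h
        · exact absurd h1 h
        · exact ⟨h, h1⟩
      · left
        rw [hS0def, Set.mem_setOf_eq, not_and_or] at h1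
        rcases h1 with h1 | h1
        · exact Or.inl h1
        · exact Or.inr (not_lt.mp h1)
    have hA : ∫⁻ x in {x | ¬ HasDerivAt F (ρ x) x}, ENNReal.ofReal (ρ x) = 0 := by
      exact setLIntegral_measure_zero _ _ (ae_iff.mp haed)
    have hB : ∫⁻ x in {x | ρ x ≤ 0}, ENNReal.ofReal (ρ x) = 0 := by
      have h : (fun x => ENNReal.ofReal (ρ x))
          =ᵐ[volume.restrict {x | ρ x ≤ 0}] (fun _ => 0) := by
        rw [Filter.EventuallyEq, ae_restrict_iff' (measurableSet_le hρmeas measurable_const)]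
        exact ae_of_all _ (fun x hx => ENNReal.ofReal_eq_zero.mpr hx)
      rw [lintegral_congr_ae h, lintegral_zero]
    refine le_antisymm ?_ (zero_le)
    calc ∫⁻ x in Sᶜ, ENNReal.ofReal (ρ x)
        ≤ ∫⁻ x in ({x | ¬ HasDerivAt F (ρ x) x} ∪ {x | ρ x ≤ 0}) ∪ (F ⁻¹' N ∩ S0),
          ENNReal.ofReal (ρ x) := lintegral_mono_set hsub
      _ ≤ (∫⁻ x in {x | ¬ HasDerivAt F (ρ x) x} ∪ {x | ρ x ≤ 0}, ENNReal.ofReal (ρ x))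
          + ∫⁻ x in F ⁻¹' N ∩ S0, ENNReal.ofReal (ρ x) := lintegral_union_le _ _ _
      _ ≤ ((∫⁻ x in {x | ¬ HasDerivAt F (ρ x) x}, ENNReal.ofReal (ρ x))
          + ∫⁻ x in {x | ρ x ≤ 0}, ENNReal.ofReal (ρ x))
          + ∫⁻ x in F ⁻¹' N ∩ S0, ENNReal.ofReal (ρ x) := by
            gcongr
            exact lintegral_union_le _ _ _
      _ = 0 := by rw [hA, hB, hTint]; simp
  have hSint : ∫⁻ x in S, ENNReal.ofReal (ρ x) = 1 := by
    have htot : ∫⁻ x, ENNReal.ofReal (ρ x) = 1 := by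
      rw [← ofReal_integral_eq_lintegral_ofReal hρint (Filter.Eventually.of_forall hρpos),
        hprob, ENNReal.ofReal_one]
    have h := lintegral_add_compl (μ := volume) (fun x => ENNReal.ofReal (ρ x)) hSmeas
    rw [htot, hScomp, add_zero] at h
    exact h
  have hSimg : volume (F '' S) = 1 := by rw [himg S hSmeas hSsubS0]; exact hSint
  have hFSmeas : MeasurableSet (F '' S) :=
    hSmeas.image_of_continuousOn_injOn hFcont.continuousOn hSinj
  have hFSsub : F '' S ⊆ Set.Ioo (0:ℝ) 1 := by
    rintro _ ⟨x, hx, rfl⟩; exact hIoo x hx.1.1 hx.1.2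
  have hdiffnull : volume (Set.Ioo (0:ℝ) 1 \ F '' S) = 0 := by
    have h := measure_diff hFSsub hFSmeas.nullMeasurableSet
      (by rw [hSimg]; exact ENNReal.one_ne_top)
    rw [h, hSimg, Real.volume_Ioo]
    simp
  have hwval : ∀ x ∈ S, w (F x) = 1 / ρ x := by
    intro x hx
    have hx0 : F x ∈ Set.Ioo (0:ℝ) 1 := hIoo x hx.1.1 hx.1.2
    have h1 := legendre_alexandrov φ u F (ρ x) x hFx hFcont hFmono hu hsurj hx.1.1 hx.1.2 hx0
    have h2 := hNprop (F x) ⟨hx0, hx.2⟩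
    exact tendsto_nhds_unique h2 h1
  constructor
  · rw [ae_iff, Measure.restrict_apply' measurableSet_Ioo]
    refine measure_mono_null ?_ hdiffnull
    rintro y ⟨hy1, hy2⟩
    refine ⟨hy2, fun hyF => ?_⟩
    obtain ⟨x, hx, rfl⟩ := hyF
    rw [Set.mem_setOf_eq] at hy1
    refine hy1 ?_
    rw [hwval x hx]
    exact one_div_pos.mpr hx.1.2
  · have hCoV := integral_image_eq_integral_abs_deriv_smul hSmeas
      (fun x hx => hx.1.1.hasDerivWithinAt) hSinj (fun y => -Real.log (w y))
    have hseteq : (F '' S : Set ℝ) =ᵐ[volume] Set.Ioo (0:ℝ) 1 := by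
      rw [MeasureTheory.ae_eq_set]
      constructor
      · rw [Set.diff_eq_empty.mpr hFSsub]; simp
      · exact hdiffnull
    have hL : ∫ y in F '' S, -Real.log (w y) = -∫ y in Set.Ioo (0:ℝ) 1, Real.log (w y) := by
      rw [setIntegral_congr_set hseteq, integral_neg]
    have hR : Set.EqOn (fun x => |ρ x| • (-Real.log (w (F x))))
        (fun x => ρ x * Real.log (ρ x)) S := by
      intro x hx
      simp only
      rw [hwval x hx, smul_eq_mul, abs_of_nonneg (hρpos x), one_div, Real.log_inv]
      ring
    have hTae : ∀ᵐ x, x ∉ F ⁻¹' N ∩ S0 := measure_eq_zero_iff_ae_notMem.mp hTnull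
    have hzero : ∫ x in Sᶜ, ρ x * Real.log (ρ x) = 0 := by
      have hae : ∀ᵐ x, x ∈ Sᶜ → ρ x * Real.log (ρ x) = 0 := by
        filter_upwards [haed, hTae] with x hx1 hx2
        intro hxc
        by_cases hρx : 0 < ρ x
        · exfalso
          have hxS0 : x ∈ S0 := ⟨hx1, hρx⟩
          rw [hSdef, Set.mem_compl_iff, Set.mem_diff, not_and_or, not_not] at hxc
          rcases hxc with h | h
          · exact h hxS0
          · exact hx2 ⟨h, hxS0⟩
        · have h0 : ρ x = 0 := le_antisymm (not_lt.mp hρx) (hρpos x)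
          rw [h0]
          simp
      exact integral_eq_zero_of_ae ((ae_restrict_iff' hSmeas.compl).mpr hae)
    have htotS : ∫ x, ρ x * Real.log (ρ x) = ∫ x in S, ρ x * Real.log (ρ x) := by
      have h := integral_add_compl hSmeas hent
      rw [← h, hzero, add_zero]
    rw [htotS, ← setIntegral_congr_fun hSmeas hR, ← hCoV, hL]
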